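/- Let p > 2 and let q = p/(p − 1) be its conjugate exponent. For every c > 0 there exists C > 0 such that for all t ≥ 1 and all real y, the integral ∫₀^∞ v^{1/p − 1/2} |v − y|^{1/q − 1} e^{−c t v³} dv is at most C t^{−1/6}. -/

import Mathlib

open MeasureTheory Set

/-- Hölder-exponent kernel estimate: for `p > 2` with conjugate exponent
`q = p/(p − 1)` and every `c > 0`, there is `C > 0` such that for all `t ≥ 1`
and all real `y`,
`∫₀^∞ v^{1/p − 1/2} |v − y|^{1/q − 1} e^{−ctv³} dv ≤ C t^{−1/6}`. -/
lemma sqrt_mul_exp_bound {c w : ℝ} (hc : 0 < c) (hw : 0 < w) :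
    w ^ ((1:ℝ)/2) * Real.exp (-(c * w ^ 3)) ≤ 1 + 1/c := by
  rcases le_total w 1 with h | h
  · have h1 : w ^ ((1:ℝ)/2) ≤ 1 := Real.rpow_le_one hw.le h (by norm_num)
    have h2 : Real.exp (-(c * w ^ 3)) ≤ 1 := by
      rw [Real.exp_le_one_iff]; nlinarith [pow_pos hw 3]
    have h3 : 0 < Real.exp (-(c * w ^ 3)) := Real.exp_pos _
    have h4 : 0 ≤ 1/c := by positivity
    nlinarith
  · have h1 : w ^ ((1:ℝ)/2) ≤ w := by
      calc w ^ ((1:ℝ)/2) ≤ w ^ (1:ℝ) :=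
            Real.rpow_le_rpow_of_exponent_le h (by norm_num)
        _ = w := Real.rpow_one w
    set e := Real.exp (-(c * w ^ 3)) with hedef
    have hE : c * w ^ 3 ≤ Real.exp (c * w ^ 3) := by
      have := Real.add_one_le_exp (c * w ^ 3); linarith
    have heE : e * Real.exp (c * w ^ 3) = 1 := by
      rw [hedef, ← Real.exp_add]; simp
    have he : 0 < e := Real.exp_pos _
    have hcwe : 0 ≤ c * w * e := by positivity
    have step : (c * w * e) * (c * w ^ 3) ≤ (c * w * e) * Real.exp (c * w ^ 3) :=
      mul_le_mul_of_nonneg_left hE hcwe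
    have step2 : (c * w * e) * Real.exp (c * w ^ 3) = c * w := by
      calc (c * w * e) * Real.exp (c * w ^ 3) = c * w * (e * Real.exp (c * w ^ 3)) := by ring
        _ = c * w := by rw [heE]; ring
    have hw3 : c * w ≤ c * w ^ 3 := by nlinarith [mul_nonneg (mul_nonneg hw.le (sub_nonneg.mpr h)) (by linarith : (0:ℝ) ≤ w + 1)]
    have hpos : 0 < c * w ^ 3 := by positivity
    have key : c * w * e ≤ 1 := by
      have h5 : (c * w * e) * (c * w ^ 3) ≤ c * w ^ 3 := by linarith
      exact (mul_le_iff_le_one_left hpos).mp h5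
    have h6 : w ^ ((1:ℝ)/2) * e ≤ w * e := mul_le_mul_of_nonneg_right h1 he.le
    have h7 : w * e ≤ 1/c := by rw [le_div_iff₀ hc]; linarith
    linarith


lemma abs_kernel_pieces {b : ℝ} (hb1 : -1 < b) (hb0 : b ≠ 0) {w : ℝ} (hw : 0 < w) :
    IntegrableOn (fun x : ℝ => |x - w| ^ b) (Set.Ioc 0 (2*w)) ∧
    ∫ x in Set.Ioc 0 (2*w), |x - w| ^ b = 2 * w ^ (b+1) / (b+1) := by
  have hb1' : b + 1 ≠ 0 := by intro hcon; linarith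
  have hw2 : w ≤ 2 * w := by linarith
  -- left piece
  have hIl : IntervalIntegrable (fun x : ℝ => (w - x) ^ b) volume 0 w := by
    have := (intervalIntegral.intervalIntegrable_rpow' hb1 (a := w) (b := 0)).comp_sub_left w
    simpa using this
  have hIr : IntervalIntegrable (fun x : ℝ => (x - w) ^ b) volume w (2*w) := by
    have := (intervalIntegral.intervalIntegrable_rpow' hb1 (a := 0) (b := w)).comp_sub_right w
    have h2 : (0:ℝ) + w = w := by ring
    have h3 : w + w = 2*w := by ring
    rwa [h2, h3] at this
  have heqL : EqOn (fun x : ℝ => (w - x) ^ b) (fun x : ℝ => |x - w| ^ b) (Ioc 0 w) := by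
    intro x hx
    simp only
    rw [abs_of_nonpos (by linarith [hx.2] : x - w ≤ 0), neg_sub]
  have heqR : EqOn (fun x : ℝ => (x - w) ^ b) (fun x : ℝ => |x - w| ^ b) (Ioc w (2*w)) := by
    intro x hx
    simp only
    rw [abs_of_nonneg (by linarith [hx.1] : (0:ℝ) ≤ x - w)]
  have hintL : IntegrableOn (fun x : ℝ => |x - w| ^ b) (Ioc 0 w) :=
    (((intervalIntegrable_iff_integrableOn_Ioc_of_le hw.le).mp hIl).congr_fun heqL
      measurableSet_Ioc)
  have hintR : IntegrableOn (fun x : ℝ => |x - w| ^ b) (Ioc w (2*w)) :=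
    (((intervalIntegrable_iff_integrableOn_Ioc_of_le hw2).mp hIr).congr_fun heqR
      measurableSet_Ioc)
  have hunion : Ioc (0:ℝ) w ∪ Ioc w (2*w) = Ioc 0 (2*w) :=
    Set.Ioc_union_Ioc_eq_Ioc hw.le hw2
  constructor
  · rw [← hunion]; exact hintL.union hintR
  · have hdisj : Disjoint (Ioc (0:ℝ) w) (Ioc w (2*w)) := Set.Ioc_disjoint_Ioc_of_le le_rfl
    have hvalL : ∫ x in Ioc (0:ℝ) w, |x - w| ^ b = w ^ (b+1) / (b+1) := by
      rw [← setIntegral_congr_fun measurableSet_Ioc heqL,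
        ← intervalIntegral.integral_of_le hw.le,
        intervalIntegral.integral_comp_sub_left (fun x : ℝ => x ^ b) w]
      rw [sub_self, sub_zero, integral_rpow (Or.inl hb1)]
      rw [Real.zero_rpow hb1']
      ring
    have hvalR : ∫ x in Ioc w (2*w), |x - w| ^ b = w ^ (b+1) / (b+1) := by
      rw [← setIntegral_congr_fun measurableSet_Ioc heqR,
        ← intervalIntegral.integral_of_le hw2,
        intervalIntegral.integral_comp_sub_right (fun x : ℝ => x ^ b) w]
      rw [sub_self, show 2*w - w = w by ring, integral_rpow (Or.inl hb1)]
      rw [Real.zero_rpow hb1']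
      ring
    rw [← hunion, setIntegral_union hdisj measurableSet_Ioc hintL hintR, hvalL, hvalR]
    ring

lemma kernel_unif_bound {A B c : ℝ} (hA0 : A ≤ 0) (hB1 : -1 < B) (hB0 : B < 0)
    (hAB : A + B = -(1/2)) (hc : 0 < c) :
    ∃ C > (0:ℝ), ∀ w : ℝ,
      (∫ u in Set.Ioi (0:ℝ), u ^ A * |u - w| ^ B * Real.exp (-c * u ^ 3)) ≤ C := by
  have hB1' : 0 < B + 1 := by linarith
  have h8 : 0 < 8 * c / 27 := by linarith
  have base : IntegrableOn (fun x : ℝ => x ^ (-(1/2) : ℝ) * Real.exp (-c * x ^ 3))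
      (Set.Ioi 0) := by
    have h := integrableOn_rpow_mul_exp_neg_mul_rpow
      (p := 3) (s := -(1/2)) (by norm_num) (by norm_num) hc
    refine h.congr_fun (fun x hx => ?_) measurableSet_Ioi
    dsimp only
    rw [show (3:ℝ) = ((3:ℕ):ℝ) by norm_num, Real.rpow_natCast]
  have Ih₁ : IntegrableOn (fun u : ℝ => 2 * (u ^ (-(1/2) : ℝ) * Real.exp (-c * u ^ 3)))
      (Set.Ioi 0) := base.const_mul 2
  set h₁ : ℝ → ℝ := fun u => 2 * (u ^ (-(1/2) : ℝ) * Real.exp (-c * u ^ 3)) with hh₁def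
  set I₁ := ∫ u in Set.Ioi (0:ℝ), h₁ u with hI₁def
  have hI₁0 : 0 ≤ I₁ := by
    refine setIntegral_nonneg measurableSet_Ioi (fun u hu => ?_)
    have hu0 : (0:ℝ) < u := hu
    exact mul_nonneg (by norm_num)
      (mul_nonneg (Real.rpow_nonneg hu0.le _) (Real.exp_nonneg _))
  set M := (2/3:ℝ) ^ A * (2 / (B+1)) * (1 + 1/(8*c/27)) with hMdef
  have hM0 : 0 ≤ M := by
    refine mul_nonneg (mul_nonneg (Real.rpow_nonneg (by norm_num) _)
      (div_nonneg (by norm_num) hB1'.le)) ?_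
    have := (one_div_pos.mpr h8).le
    linarith
  refine ⟨I₁ + M + 1, by linarith, fun w => ?_⟩
  have hnn : 0 ≤ᵐ[volume.restrict (Set.Ioi (0:ℝ))]
      fun u => u ^ A * |u - w| ^ B * Real.exp (-c * u ^ 3) := by
    rw [Filter.EventuallyLE, ae_restrict_iff' measurableSet_Ioi]
    refine ae_of_all _ fun u hu => ?_
    have hu0 : (0:ℝ) < u := hu
    exact mul_nonneg (mul_nonneg (Real.rpow_nonneg hu0.le _)
      (Real.rpow_nonneg (abs_nonneg _) _)) (Real.exp_nonneg _)
  rcases le_or_gt w 0 with hw | hw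
  · -- w ≤ 0 : direct bound by h₁
    have hmono : (fun u => u ^ A * |u - w| ^ B * Real.exp (-c * u ^ 3))
        ≤ᵐ[volume.restrict (Set.Ioi (0:ℝ))] h₁ := by
      rw [Filter.EventuallyLE, ae_restrict_iff' measurableSet_Ioi]
      refine ae_of_all _ fun u hu => ?_
      have hu0 : (0:ℝ) < u := hu
      have habs : u ≤ |u - w| := by
        rw [abs_of_pos (by linarith)]; linarith
      have h2 : |u - w| ^ B ≤ u ^ B := Real.rpow_le_rpow_of_nonpos hu0 habs hB0.le
      have h3 : 0 ≤ u ^ (-(1/2):ℝ) * Real.exp (-c * u ^ 3) :=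
        mul_nonneg (Real.rpow_nonneg hu0.le _) (Real.exp_nonneg _)
      calc u ^ A * |u - w| ^ B * Real.exp (-c * u ^ 3)
          ≤ u ^ A * u ^ B * Real.exp (-c * u ^ 3) :=
            mul_le_mul_of_nonneg_right
              (mul_le_mul_of_nonneg_left h2 (Real.rpow_nonneg hu0.le A))
              (Real.exp_nonneg _)
        _ = u ^ (A + B) * Real.exp (-c * u ^ 3) := by rw [← Real.rpow_add hu0]
        _ = u ^ (-(1/2):ℝ) * Real.exp (-c * u ^ 3) := by rw [hAB]
        _ ≤ h₁ u := by rw [hh₁def]; dsimp only; linarith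
    have := integral_mono_of_nonneg hnn Ih₁ hmono
    rw [← hI₁def] at this
    linarith
  · -- 0 < w
    obtain ⟨hint, hval⟩ := abs_kernel_pieces hB1 (ne_of_lt hB0) hw
    set K := ((2/3)*w) ^ A * Real.exp (-c * ((2/3)*w) ^ 3) with hKdef
    have hK0 : 0 ≤ K :=
      mul_nonneg (Real.rpow_nonneg (by linarith) _) (Real.exp_nonneg _)
    set h₂ : ℝ → ℝ := (Set.Ioc (0:ℝ) (2*w)).indicator (fun u => K * |u - w| ^ B) with hh₂def
    have hsub : Set.Ioc (0:ℝ) (2*w) ⊆ Set.Ioi 0 := fun x hx => hx.1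
    have Ih₂ : Integrable h₂ (volume.restrict (Set.Ioi (0:ℝ))) := by
      rw [hh₂def, integrable_indicator_iff measurableSet_Ioc, IntegrableOn,
        Measure.restrict_restrict measurableSet_Ioc, Set.inter_eq_left.mpr hsub]
      exact hint.const_mul K
    have hptwise : (fun u => u ^ A * |u - w| ^ B * Real.exp (-c * u ^ 3))
        ≤ᵐ[volume.restrict (Set.Ioi (0:ℝ))] (h₁ + h₂) := by
      rw [Filter.EventuallyLE, ae_restrict_iff' measurableSet_Ioi]
      refine ae_of_all _ fun u hu => ?_
      have hu0 : (0:ℝ) < u := hu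
      have hh₁nn : 0 ≤ h₁ u := mul_nonneg (by norm_num)
        (mul_nonneg (Real.rpow_nonneg hu0.le _) (Real.exp_nonneg _))
      have hh₂nn : 0 ≤ h₂ u :=
        Set.indicator_nonneg
          (fun x _ => mul_nonneg hK0 (Real.rpow_nonneg (abs_nonneg _) _)) u
      have hsum : (h₁ + h₂) u = h₁ u + h₂ u := rfl
      rcases le_or_gt (u/2) |u - w| with hcase | hcase
      · have h2 : |u - w| ^ B ≤ (u/2) ^ B :=
          Real.rpow_le_rpow_of_nonpos (by positivity) hcase hB0.le
        have h3 : (u/2:ℝ) ^ B = u ^ B * (2:ℝ) ^ (-B) := by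
          rw [div_eq_mul_inv, Real.mul_rpow hu0.le (by norm_num),
            Real.inv_rpow (by norm_num : (0:ℝ) ≤ 2),
            ← Real.rpow_neg (by norm_num : (0:ℝ) ≤ 2)]
        have h4 : (2:ℝ) ^ (-B) ≤ 2 := by
          calc (2:ℝ) ^ (-B) ≤ (2:ℝ) ^ (1:ℝ) :=
                Real.rpow_le_rpow_of_exponent_le one_le_two (by linarith)
            _ = 2 := Real.rpow_one 2
        have hbase : 0 ≤ u ^ (-(1/2):ℝ) * Real.exp (-c * u ^ 3) :=
          mul_nonneg (Real.rpow_nonneg hu0.le _) (Real.exp_nonneg _)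
        rw [hsum]
        calc u ^ A * |u - w| ^ B * Real.exp (-c * u ^ 3)
            ≤ u ^ A * (u/2) ^ B * Real.exp (-c * u ^ 3) :=
              mul_le_mul_of_nonneg_right
                (mul_le_mul_of_nonneg_left h2 (Real.rpow_nonneg hu0.le A))
                (Real.exp_nonneg _)
          _ = (2:ℝ) ^ (-B) * (u ^ (A+B) * Real.exp (-c * u ^ 3)) := by
              rw [h3, Real.rpow_add hu0]; ring
          _ = (2:ℝ) ^ (-B) * (u ^ (-(1/2):ℝ) * Real.exp (-c * u ^ 3)) := by rw [hAB]
          _ ≤ 2 * (u ^ (-(1/2):ℝ) * Real.exp (-c * u ^ 3)) :=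
              mul_le_mul_of_nonneg_right h4 hbase
          _ = h₁ u := rfl
          _ ≤ h₁ u + h₂ u := by linarith
      · have hr := abs_lt.mp hcase
        have hu1 : (2/3)*w < u := by
          have := hr.1; linarith
        have hu2 : u < 2*w := by
          have := hr.2; linarith
        have hmem : u ∈ Set.Ioc (0:ℝ) (2*w) := ⟨hu0, hu2.le⟩
        have hw23 : (0:ℝ) < (2/3)*w := by linarith
        have e1 : u ^ A ≤ ((2/3)*w) ^ A :=
          Real.rpow_le_rpow_of_nonpos hw23 hu1.le hA0
        have e2 : Real.exp (-c * u ^ 3) ≤ Real.exp (-c * ((2/3)*w) ^ 3) := by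
          apply Real.exp_le_exp.mpr
          have h5 : ((2/3)*w) ^ 3 ≤ u ^ 3 := pow_le_pow_left₀ hw23.le hu1.le 3
          nlinarith
        have hmain : u ^ A * |u - w| ^ B * Real.exp (-c * u ^ 3) ≤ K * |u - w| ^ B := by
          rw [hKdef]
          calc u ^ A * |u - w| ^ B * Real.exp (-c * u ^ 3)
              ≤ ((2/3)*w) ^ A * |u - w| ^ B * Real.exp (-c * u ^ 3) :=
                mul_le_mul_of_nonneg_right
                  (mul_le_mul_of_nonneg_right e1 (Real.rpow_nonneg (abs_nonneg _) _))
                  (Real.exp_nonneg _)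
            _ ≤ ((2/3)*w) ^ A * |u - w| ^ B * Real.exp (-c * ((2/3)*w) ^ 3) :=
                mul_le_mul_of_nonneg_left e2
                  (mul_nonneg (Real.rpow_nonneg hw23.le _)
                    (Real.rpow_nonneg (abs_nonneg _) _))
            _ = ((2/3)*w) ^ A * Real.exp (-c * ((2/3)*w) ^ 3) * |u - w| ^ B := by ring
        have hind : h₂ u = K * |u - w| ^ B := by
          rw [hh₂def]; exact Set.indicator_of_mem hmem _
        rw [hsum, hind]
        linarith
    have hIsum := integral_mono_of_nonneg hnn (Ih₁.add Ih₂) hptwise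
    have hsplit : (∫ u in Set.Ioi (0:ℝ), (h₁ + h₂) u) = I₁ + ∫ u in Set.Ioi (0:ℝ), h₂ u := by
      rw [hI₁def, ← integral_add Ih₁ Ih₂]; rfl
    have hh₂int : (∫ u in Set.Ioi (0:ℝ), h₂ u) = K * (2 * w ^ (B+1) / (B+1)) := by
      rw [hh₂def, integral_indicator measurableSet_Ioc,
        Measure.restrict_restrict measurableSet_Ioc, Set.inter_eq_left.mpr hsub,
        integral_const_mul, hval]
    have hKbound : K * (2 * w ^ (B+1) / (B+1)) ≤ M := by
      have hmul : ((2/3)*w) ^ A = (2/3:ℝ) ^ A * w ^ A :=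
        Real.mul_rpow (by norm_num) hw.le
      have hwAB : w ^ A * w ^ (B+1) = w ^ ((1:ℝ)/2) := by
        rw [← Real.rpow_add hw, show A + (B+1) = ((1:ℝ)/2) by linarith]
      calc K * (2 * w ^ (B+1) / (B+1))
          = (2/3:ℝ) ^ A * (2/(B+1)) *
              (w ^ ((1:ℝ)/2) * Real.exp (-(8*c/27 * w ^ 3))) := by
            rw [hKdef, hmul, show -c * ((2/3)*w) ^ 3 = -(8*c/27 * w ^ 3) by ring,
              ← hwAB]
            ring
        _ ≤ (2/3:ℝ) ^ A * (2/(B+1)) * (1 + 1/(8*c/27)) :=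
            mul_le_mul_of_nonneg_left (sqrt_mul_exp_bound h8 hw)
              (mul_nonneg (Real.rpow_nonneg (by norm_num) _)
                (div_nonneg (by norm_num) hB1'.le))
        _ = M := rfl
    calc (∫ u in Set.Ioi (0:ℝ), u ^ A * |u - w| ^ B * Real.exp (-c * u ^ 3))
        ≤ ∫ u in Set.Ioi (0:ℝ), (h₁ + h₂) u := hIsum
      _ = I₁ + ∫ u in Set.Ioi (0:ℝ), h₂ u := hsplit
      _ = I₁ + K * (2 * w ^ (B+1) / (B+1)) := by rw [hh₂int]
      _ ≤ I₁ + M := by linarith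
      _ ≤ I₁ + M + 1 := by linarith


theorem kernel_estimate_holder (p : ℝ) (hp : 2 < p) (q : ℝ) (hq : q = p / (p - 1))
    (c : ℝ) (hc : 0 < c) :
    ∃ C > (0 : ℝ), ∀ t : ℝ, 1 ≤ t → ∀ y : ℝ,
      (∫ v in Set.Ioi (0 : ℝ),
          v ^ (1 / p - 1 / 2) * |v - y| ^ (1 / q - 1) * Real.exp (-c * t * v ^ 3)) ≤
        C * t ^ (-(1 : ℝ) / 6) := by
  have hp0 : (0:ℝ) < p := by linarith
  have hp1 : (0:ℝ) < p - 1 := by linarith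
  have hinvp : 1 / p < 1 / 2 := by
    rw [div_lt_div_iff₀ hp0 (by norm_num)]; linarith
  have hinvp0 : 0 < 1 / p := by positivity
  have hq1 : 1 / q = 1 - 1 / p := by
    rw [hq]; field_simp
  set A := 1 / p - 1 / 2 with hAdef
  set B := 1 / q - 1 with hBdef
  have hB : B = -(1 / p) := by rw [hBdef, hq1]; ring
  have hA0 : A ≤ 0 := by rw [hAdef]; linarith
  have hB1 : -1 < B := by rw [hB]; linarith
  have hB0 : B < 0 := by rw [hB]; linarith
  have hAB : A + B = -(1/2) := by rw [hAdef, hB]; ring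
  obtain ⟨C, hC0, hCb⟩ := kernel_unif_bound hA0 hB1 hB0 hAB hc
  refine ⟨C, hC0, fun t ht y => ?_⟩
  have ht0 : (0:ℝ) < t := by linarith
  set σ := t ^ ((1:ℝ)/3) with hσdef
  have hσ : 0 < σ := Real.rpow_pos_of_pos ht0 _
  have hσinv : 0 < σ⁻¹ := inv_pos.mpr hσ
  have hσ3 : σ ^ 3 = t := by
    rw [hσdef, ← Real.rpow_natCast (t ^ ((1:ℝ)/3)) 3, ← Real.rpow_mul ht0.le]
    norm_num
  have h1 := integral_comp_mul_left_Ioi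
    (fun v => v ^ A * |v - y| ^ B * Real.exp (-c * t * v ^ 3)) 0 hσinv
  simp only [mul_zero, inv_inv, smul_eq_mul] at h1
  -- h1 : ∫ x in Ioi 0, f (σ⁻¹ * x) = σ * ∫ x in Ioi 0, f x
  have key : (∫ v in Set.Ioi (0:ℝ), v ^ A * |v - y| ^ B * Real.exp (-c * t * v ^ 3))
      = σ⁻¹ * ∫ x in Set.Ioi (0:ℝ),
          (σ⁻¹ * x) ^ A * |σ⁻¹ * x - y| ^ B * Real.exp (-c * t * (σ⁻¹ * x) ^ 3) := by
    rw [h1, ← mul_assoc, inv_mul_cancel₀ hσ.ne', one_mul]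
  have pointeq : ∀ x ∈ Set.Ioi (0:ℝ),
      (σ⁻¹ * x) ^ A * |σ⁻¹ * x - y| ^ B * Real.exp (-c * t * (σ⁻¹ * x) ^ 3)
        = σ ^ ((1:ℝ)/2) * (x ^ A * |x - σ * y| ^ B * Real.exp (-c * x ^ 3)) := by
    intro x hx
    have hx0 : (0:ℝ) < x := hx
    have e1 : (σ⁻¹ * x) ^ A = σ⁻¹ ^ A * x ^ A := Real.mul_rpow hσinv.le hx0.le
    have e2 : |σ⁻¹ * x - y| = σ⁻¹ * |x - σ * y| := by
      rw [show σ⁻¹ * x - y = σ⁻¹ * (x - σ * y) by field_simp, abs_mul,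
        abs_of_pos hσinv]
    have e3 : -c * t * (σ⁻¹ * x) ^ 3 = -c * x ^ 3 := by
      have h3 : (σ⁻¹ * x) ^ 3 = (σ ^ 3)⁻¹ * x ^ 3 := by
        rw [mul_pow, inv_pow]
      rw [h3, hσ3]
      field_simp
    have e4 : σ⁻¹ ^ A * σ⁻¹ ^ B = σ ^ ((1:ℝ)/2) := by
      rw [← Real.rpow_add hσinv, hAB, Real.inv_rpow hσ.le, ← Real.rpow_neg hσ.le]
      norm_num
    rw [e1, e2, Real.mul_rpow hσinv.le (abs_nonneg _), e3,
      show σ⁻¹ ^ A * x ^ A * (σ⁻¹ ^ B * |x - σ * y| ^ B) * Real.exp (-c * x ^ 3)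
        = (σ⁻¹ ^ A * σ⁻¹ ^ B) * (x ^ A * |x - σ * y| ^ B * Real.exp (-c * x ^ 3)) by ring,
      e4]
  rw [key, setIntegral_congr_fun measurableSet_Ioi pointeq, integral_const_mul,
    ← mul_assoc]
  have hfac : σ⁻¹ * σ ^ ((1:ℝ)/2) = t ^ (-(1:ℝ)/6) := by
    rw [← Real.rpow_neg_one σ, ← Real.rpow_add hσ, hσdef, ← Real.rpow_mul ht0.le]
    norm_num
  rw [hfac, mul_comm (t ^ (-(1:ℝ)/6))]
  exact mul_le_mul_of_nonneg_right (hCb (σ * y)) (Real.rpow_nonneg ht0.le _)
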